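/- For a, b > 0 and m ≥ 2, ∫_0^∞ cosh^{-(2m-2)}(s − α) ds = ((2m−4)!!/(2m−3)!!) ( 2b/(a+b) + Σ_{k=2}^{m−1} ((2k−3)!!/(2k−2)!!) (b−a)(4ab)^{k−1} / (a+b)^{2k−1} ), where α = (1/2) log(b/a). -/

import Mathlib

open MeasureTheory Real Set Filter Topology

lemma sech_le_one (x : ℝ) : (Real.cosh x)⁻¹ ≤ 1 :=
  inv_le_one_of_one_le₀ (Real.one_le_cosh x)

lemma half_exp_le_cosh (x : ℝ) : Real.exp x / 2 ≤ Real.cosh x := by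
  rw [Real.cosh_eq]
  have := (Real.exp_pos (-x)).le
  linarith

lemma sech_le_exp (x : ℝ) : (Real.cosh x)⁻¹ ≤ 2 * Real.exp (-x) := by
  calc (Real.cosh x)⁻¹ ≤ (Real.exp x / 2)⁻¹ :=
        inv_anti₀ (by positivity) (half_exp_le_cosh x)
    _ = 2 * Real.exp (-x) := by rw [Real.exp_neg]; field_simp

lemma tendsto_cosh_atTop' : Tendsto Real.cosh atTop atTop :=
  tendsto_atTop_mono half_exp_le_cosh (Real.tendsto_exp_atTop.atTop_div_const two_pos)

lemma tendsto_tanh_atTop' : Tendsto Real.tanh atTop (𝓝 1) := by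
  have key : ∀ x : ℝ, 1 - Real.tanh x = Real.exp (-x) / Real.cosh x := by
    intro x
    rw [Real.tanh_eq_sinh_div_cosh, ← Real.cosh_sub_sinh]
    field_simp
  have hb : Tendsto (fun x : ℝ => Real.exp (-x) * (2 * Real.exp (-x))) atTop (𝓝 0) := by
    have h0 := Real.tendsto_exp_neg_atTop_nhds_zero
    have := h0.mul (h0.const_mul 2)
    simpa using this
  have hsq : Tendsto (fun x : ℝ => 1 - Real.tanh x) atTop (𝓝 0) := by
    apply squeeze_zero (fun x => by rw [key]; positivity) (fun x => ?_) hb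
    rw [key, div_eq_mul_inv]
    exact mul_le_mul_of_nonneg_left (sech_le_exp x) (Real.exp_pos _).le
  have h2 := (tendsto_const_nhds (x := (1:ℝ))).sub hsq
  simp only [sub_sub_cancel, sub_zero] at h2
  exact h2

lemma integrable_sech_pow (α : ℝ) (n : ℕ) (hn : 1 ≤ n) :
    IntegrableOn (fun s => ((Real.cosh (s - α))⁻¹) ^ n) (Set.Ioi (0:ℝ)) := by
  have hcont : Continuous fun s : ℝ => ((Real.cosh (s - α))⁻¹) ^ n :=
    ((Real.continuous_cosh.comp (continuous_id.sub continuous_const)).inv₀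
      (fun x => (Real.cosh_pos _).ne')).pow n
  have hint : IntegrableOn (fun s : ℝ => 2 * Real.exp α * Real.exp (-s)) (Set.Ioi (0:ℝ)) := by
    have := (exp_neg_integrableOn_Ioi (0:ℝ) (one_pos)).const_mul (2 * Real.exp α)
    have h2 : Integrable (fun s : ℝ => 2 * Real.exp α * Real.exp (-s))
        (volume.restrict (Set.Ioi (0:ℝ))) := by simpa using this
    exact h2
  apply hint.integrable.mono' hcont.aestronglyMeasurable
  filter_upwards with s
  have h0 : (0:ℝ) < Real.cosh (s - α) := Real.cosh_pos _
  have h1 : ((Real.cosh (s - α))⁻¹) ^ n ≤ (Real.cosh (s - α))⁻¹ :=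
    pow_le_of_le_one (by positivity) (sech_le_one _) (by omega)
  have h2 : (Real.cosh (s - α))⁻¹ ≤ 2 * Real.exp (-(s - α)) := sech_le_exp _
  have h3 : (2:ℝ) * Real.exp (-(s - α)) = 2 * Real.exp α * Real.exp (-s) := by
    rw [mul_assoc, ← Real.exp_add]; ring_nf
  rw [Real.norm_eq_abs, abs_of_nonneg (by positivity)]
  linarith

lemma deriv_aux (n : ℕ) (x : ℝ) :
    HasDerivAt (fun y => Real.sinh y * ((Real.cosh y)⁻¹) ^ (n+1))
      ((n+1) * ((Real.cosh x)⁻¹)^(n+2) - n * ((Real.cosh x)⁻¹)^n) x := by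
  have h1 := ((Real.hasDerivAt_cosh x).inv (Real.cosh_pos x).ne').pow (n+1)
  have h3 := (Real.hasDerivAt_sinh x).mul h1
  refine h3.congr_deriv ?_
  symm
  have hs : Real.sinh x ^ 2 = Real.cosh x ^ 2 - 1 := Real.sinh_sq x
  have hd : Real.cosh x * (Real.cosh x)⁻¹ = 1 :=
    mul_inv_cancel₀ (Real.cosh_pos x).ne'
  set c := Real.cosh x with hcdef
  set s := Real.sinh x with hsdef
  set d := (Real.cosh x)⁻¹ with hddef
  simp only [Nat.add_sub_cancel, Pi.pow_apply, Pi.inv_apply, div_eq_mul_inv, ← hddef, ← inv_pow]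
  push_cast
  linear_combination ((n:ℝ)+1) * d^(n+2) * hs + (((n:ℝ)+1) * d^n * (c*d+1) - d^n) * hd

lemma deriv_aux' (α : ℝ) (n : ℕ) (x : ℝ) :
    HasDerivAt (fun y => Real.sinh (y - α) * ((Real.cosh (y - α))⁻¹) ^ (n+1))
      ((n+1) * ((Real.cosh (x - α))⁻¹)^(n+2) - n * ((Real.cosh (x - α))⁻¹)^n) x := by
  have := (deriv_aux n (x - α)).comp x ((hasDerivAt_id x).sub_const α)
  simpa [Function.comp_def] using this

lemma tendsto_tanh_sech (α : ℝ) (n : ℕ) :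
    Tendsto (fun s => Real.sinh (s - α) * ((Real.cosh (s - α))⁻¹) ^ (n+1)) atTop
      (𝓝 (if n = 0 then 1 else 0)) := by
  have hshift : Tendsto (fun s : ℝ => s - α) atTop atTop :=
    tendsto_atTop_add_const_right _ _ tendsto_id
  have htanh : Tendsto (fun s => Real.tanh (s - α)) atTop (𝓝 1) :=
    tendsto_tanh_atTop'.comp hshift
  have hsech : Tendsto (fun s => (Real.cosh (s - α))⁻¹) atTop (𝓝 0) :=
    (tendsto_cosh_atTop'.comp hshift).inv_tendsto_atTop
  have heq : ∀ s : ℝ, Real.sinh (s - α) * ((Real.cosh (s - α))⁻¹) ^ (n+1)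
      = Real.tanh (s - α) * ((Real.cosh (s - α))⁻¹) ^ n := by
    intro s
    rw [Real.tanh_eq_sinh_div_cosh, div_eq_mul_inv, pow_succ]
    ring
  simp only [heq]
  rcases Nat.eq_zero_or_pos n with rfl | hn
  · simpa using htanh
  · have h0 : Tendsto (fun s => ((Real.cosh (s - α))⁻¹) ^ n) atTop (𝓝 0) := by
      have := hsech.pow n
      simpa [zero_pow hn.ne'] using this
    have h1 := htanh.mul h0
    simp only [mul_zero] at h1
    simpa [if_neg hn.ne'] using h1

lemma ftc_key (α : ℝ) (n : ℕ) :
    (n+1:ℝ) * (∫ s in Set.Ioi (0:ℝ), ((Real.cosh (s - α))⁻¹)^(n+2))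
      - n * (∫ s in Set.Ioi (0:ℝ), ((Real.cosh (s - α))⁻¹)^n)
      = (if n = 0 then (1:ℝ) else 0) + Real.sinh α * ((Real.cosh α)⁻¹) ^ (n+1) := by
  have hint2 : IntegrableOn (fun s => ((Real.cosh (s - α))⁻¹)^(n+2)) (Set.Ioi (0:ℝ)) :=
    integrable_sech_pow α (n+2) (by omega)
  have hcont : ContinuousWithinAt
      (fun y => Real.sinh (y - α) * ((Real.cosh (y - α))⁻¹) ^ (n+1)) (Set.Ici (0:ℝ)) 0 :=
    (deriv_aux' α n 0).continuousAt.continuousWithinAt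
  have hintd : IntegrableOn
      (fun s => ((n:ℝ)+1) * ((Real.cosh (s - α))⁻¹)^(n+2) - n * ((Real.cosh (s - α))⁻¹)^n)
      (Set.Ioi (0:ℝ)) := by
    rcases Nat.eq_zero_or_pos n with rfl | hn
    · simpa using hint2
    · exact (hint2.const_mul _).sub ((integrable_sech_pow α n hn).const_mul _)
  have key := integral_Ioi_of_hasDerivAt_of_tendsto hcont
    (fun x _ => deriv_aux' α n x) hintd (tendsto_tanh_sech α n)
  have hodd : Real.sinh (0 - α) * ((Real.cosh (0 - α))⁻¹) ^ (n+1)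
      = - (Real.sinh α * ((Real.cosh α)⁻¹) ^ (n+1)) := by
    rw [zero_sub, Real.sinh_neg, Real.cosh_neg]; ring
  rcases Nat.eq_zero_or_pos n with rfl | hn
  · have heq : (∫ s in Set.Ioi (0:ℝ),
        (((0:ℕ):ℝ)+1) * ((Real.cosh (s - α))⁻¹)^(0+2) - ((0:ℕ):ℝ) * ((Real.cosh (s - α))⁻¹)^0)
        = ∫ s in Set.Ioi (0:ℝ), ((Real.cosh (s - α))⁻¹)^(0+2) := by
      congr 1 with s
      push_cast
      ring
    rw [heq, hodd] at key
    push_cast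
    rw [key]
    push_cast
    ring
  · have hint1 : IntegrableOn (fun s => ((Real.cosh (s - α))⁻¹)^n) (Set.Ioi (0:ℝ)) :=
      integrable_sech_pow α n hn
    have hsplit : (∫ s in Set.Ioi (0:ℝ),
          ((n:ℝ)+1) * ((Real.cosh (s - α))⁻¹)^(n+2) - n * ((Real.cosh (s - α))⁻¹)^n)
        = (n+1:ℝ) * (∫ s in Set.Ioi (0:ℝ), ((Real.cosh (s - α))⁻¹)^(n+2))
          - n * (∫ s in Set.Ioi (0:ℝ), ((Real.cosh (s - α))⁻¹)^n) := by
      rw [integral_sub (hint2.const_mul _) (hint1.const_mul _),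
        MeasureTheory.integral_const_mul, MeasureTheory.integral_const_mul]
    rw [hsplit, hodd] at key
    rw [key]
    ring

lemma main_ind (α : ℝ) (j : ℕ) :
    (∫ s in Set.Ioi (0:ℝ), ((Real.cosh (s - α))⁻¹)^(2*j+2))
      = (((2*j).doubleFactorial : ℝ)/((2*j+1).doubleFactorial : ℝ)) *
        ((1 + Real.sinh α * (Real.cosh α)⁻¹) +
          ∑ i ∈ Finset.range j, (((2*i+1).doubleFactorial : ℝ)/((2*i+2).doubleFactorial : ℝ)) *
            (((Real.cosh α)⁻¹)^(2*i+2) * (Real.sinh α * (Real.cosh α)⁻¹))) := by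
  induction j with
  | zero =>
    have key := ftc_key α 0
    norm_num at key ⊢
    convert key using 2
  | succ j ih =>
    have key := ftc_key α (2*j+2)
    rw [if_neg (by omega), ih] at key
    have e1 : 2*(j+1)+2 = (2*j+2)+2 := by ring
    have e2 : 2*(j+1) = (2*j)+2 := by ring
    have e3 : (2*j+2)+1 = (2*j+1)+2 := by ring
    rw [e1, e2, e3, Nat.doubleFactorial_add_two, Nat.doubleFactorial_add_two,
      Finset.sum_range_succ]
    set J4 := ∫ s in Set.Ioi (0:ℝ), ((Real.cosh (s - α))⁻¹)^((2*j+2)+2) with hJ4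
    set S := ∑ i ∈ Finset.range j, (((2*i+1).doubleFactorial : ℝ)/((2*i+2).doubleFactorial : ℝ)) *
            (((Real.cosh α)⁻¹)^(2*i+2) * (Real.sinh α * (Real.cosh α)⁻¹)) with hS
    set c := (Real.cosh α)⁻¹ with hc
    set sh := Real.sinh α with hsh
    set d0 := ((2*j).doubleFactorial : ℝ) with hd0
    set d1 := ((2*j+1).doubleFactorial : ℝ) with hd1
    set B := (1 + sh * c) + S with hB
    have hd0p : (0:ℝ) < d0 := by rw [hd0]; exact_mod_cast Nat.doubleFactorial_pos _
    have hd1p : (0:ℝ) < d1 := by rw [hd1]; exact_mod_cast Nat.doubleFactorial_pos _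
    push_cast at key ⊢
    have hpow : sh * c^(2*j+2+1) = c^(2*j+2) * (sh*c) := by ring
    rw [hpow] at key
    have key2 : (2*(j:ℝ)+3) * J4 = (2*(j:ℝ)+2) * (d0/d1 * B) + c^(2*j+2) * (sh*c) := by
      linarith [key]
    have h23 : (2*(j:ℝ)+3) ≠ 0 := by positivity
    have hJ4v : J4 = ((2*(j:ℝ)+2) * (d0/d1 * B) + c^(2*j+2) * (sh*c)) / (2*(j:ℝ)+3) := by
      rw [eq_div_iff h23]; linarith [key2]
    rw [hJ4v, hB]
    rw [Nat.doubleFactorial_add_two (2*j)]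
    push_cast [← hd0, ← hd1]
    field_simp
    ring

/-- Closed form of `I[-(2m-2)] = ∫₀^∞ cosh^{-(2m-2)}(s−α) ds`, `α = ½ log(b/a)`. -/
theorem coshInt_even (m : ℕ) (hm : 2 ≤ m) (a b : ℝ) (ha : 0 < a) (hb : 0 < b) :
    (∫ s in Set.Ioi (0 : ℝ), (Real.cosh (s - Real.log (b / a) / 2))⁻¹ ^ (2 * m - 2))
      = ((Nat.doubleFactorial (2 * m - 4) : ℝ) / (Nat.doubleFactorial (2 * m - 3) : ℝ)) *
          (2 * b / (a + b) +
            ∑ k ∈ Finset.Icc 2 (m - 1),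
              ((Nat.doubleFactorial (2 * k - 3) : ℝ) / (Nat.doubleFactorial (2 * k - 2) : ℝ)) *
                ((b - a) * (4 * a * b) ^ (k - 1) / (a + b) ^ (2 * k - 1))) := by
  obtain ⟨j, rfl⟩ : ∃ j, m = j + 2 := ⟨m - 2, by omega⟩
  set α := Real.log (b / a) / 2 with hα
  -- values of cosh α and sinh α
  set sa := Real.sqrt a with hsa
  set sb := Real.sqrt b with hsb
  have hsap : 0 < sa := Real.sqrt_pos.2 ha
  have hsbp : 0 < sb := Real.sqrt_pos.2 hb
  have hsa2 : sa ^ 2 = a := Real.sq_sqrt ha.le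
  have hsb2 : sb ^ 2 = b := Real.sq_sqrt hb.le
  have hba : (0:ℝ) < b / a := div_pos hb ha
  have hexp : Real.exp α = sb / sa := by
    rw [hα, ← Real.log_sqrt hba.le, Real.exp_log (Real.sqrt_pos.2 hba),
      Real.sqrt_div hb.le]
  have hexpneg : Real.exp (-α) = sa / sb := by
    rw [Real.exp_neg, hexp, inv_div]
  have hcosh : Real.cosh α = (sa^2 + sb^2) / (2 * sa * sb) := by
    rw [Real.cosh_eq, hexp, hexpneg]
    field_simp
    ring
  have hsinh : Real.sinh α = (sb^2 - sa^2) / (2 * sa * sb) := by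
    rw [Real.sinh_eq, hexp, hexpneg]
    field_simp
  have hs2p : (0:ℝ) < sa^2 + sb^2 := by positivity
  -- rewrite the integral
  have e0 : 2*(j+2)-2 = 2*j+2 := by omega
  have e1 : 2*(j+2)-4 = 2*j := by omega
  have e2 : 2*(j+2)-3 = 2*j+1 := by omega
  have e3 : (j+2)-1 = j+1 := by omega
  rw [e0, main_ind α j, e1, e2, e3, ← Finset.Ico_add_one_right_eq_Icc, Finset.sum_Ico_eq_sum_range]
  have e4 : j + 1 + 1 - 2 = j := by omega
  rw [e4]
  congr 1
  rw [← hsa2, ← hsb2]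
  congr 1
  · -- base term
    rw [hsinh, hcosh]
    field_simp
    ring
  · -- sums
    apply Finset.sum_congr rfl
    intro i _
    have f1 : 2*(2+i)-3 = 2*i+1 := by omega
    have f2 : 2*(2+i)-2 = 2*i+2 := by omega
    have f3 : (2+i)-1 = i+1 := by omega
    have f4 : 2*(2+i)-1 = 2*i+3 := by omega
    rw [f1, f2, f3, f4]
    congr 1
    have hcp : Real.cosh α ≠ 0 := (Real.cosh_pos α).ne'
    have h5 : 2*i+2 = 2*(i+1) := by ring
    have hpow : ((Real.cosh α)⁻¹)^(2*i+2) = (((Real.cosh α)⁻¹)^2)^(i+1) := by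
      rw [h5, pow_mul]
    have hc2 : ((Real.cosh α)⁻¹)^2 = 4*sa^2*sb^2/((sa^2+sb^2)^2) := by
      rw [hcosh]
      field_simp
      ring
    have hshc : Real.sinh α * (Real.cosh α)⁻¹ = (sb^2-sa^2)/(sa^2+sb^2) := by
      rw [hsinh, hcosh]
      field_simp
    rw [hpow, hc2, hshc, div_pow, ← pow_mul, div_mul_div_comm, ← pow_succ]
    have h6 : 2*(i+1)+1 = 2*i+3 := by ring
    rw [h6]
    congr 1
    ring
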